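/- Every projective left (R,P_Ω)-module is a direct summand of a free left (R,P_Ω)-module: if (M,𝔪_Ω) is a projective left (R,P_Ω)-module, then there exist a set X, a free left (R,P_Ω)-module (F,𝔭_Ω) on X, and left (R,P_Ω)-module homomorphisms ψ : M → F and φ : F → M with φ ∘ ψ = id_M. -/
import Mathlib


universe u

/-- A left multiple Rota-Baxter module `(M, 𝔪_Ω)` over a multiple Rota-Baxter algebra
`(R, P_Ω)` of pair weight `(λ_Ω, λ_Ω)`. -/
structure MRBModule (k R Ω : Type u) [CommRing k] [Ring R] [Algebra k R]
    (lam : Ω → k) (P : Ω → R →ₗ[k] R) : Type (u + 1) where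
  carrier : Type u
  [isAddCommGroup : AddCommGroup carrier]
  [isModulek : Module k carrier]
  [isModuleR : Module R carrier]
  [isTower : IsScalarTower k R carrier]
  op : Ω → carrier →ₗ[k] carrier
  rb : ∀ (α β : Ω) (x : R) (m : carrier),
    P α x • op β m =
      op α (x • op β m) + op β (P α x • m)
        + lam β • op α (x • m) + lam α • op β (x • m)

attribute [instance] MRBModule.isAddCommGroup MRBModule.isModulek
  MRBModule.isModuleR MRBModule.isTower

namespace MRBFree

inductive PreF (R Ω X : Type u) : Type u
  | var : X → PreF R Ω X
  | zero : PreF R Ω X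
  | add : PreF R Ω X → PreF R Ω X → PreF R Ω X
  | smul : R → PreF R Ω X → PreF R Ω X
  | op : Ω → PreF R Ω X → PreF R Ω X

variable (k : Type u) {R Ω : Type u} (X : Type u) [CommRing k] [Ring R] [Algebra k R]
  (lam : Ω → k) (P : Ω → R →ₗ[k] R)

inductive Rel : PreF R Ω X → PreF R Ω X → Prop
  | refl (a) : Rel a a
  | symm {a b} : Rel a b → Rel b a
  | trans {a b c} : Rel a b → Rel b c → Rel a c
  | add_congr {a a' b b'} : Rel a a' → Rel b b' → Rel (.add a b) (.add a' b')
  | smul_congr (r) {a a'} : Rel a a' → Rel (.smul r a) (.smul r a')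
  | op_congr (ω) {a a'} : Rel a a' → Rel (.op ω a) (.op ω a')
  | add_assoc (a b c) : Rel (.add (.add a b) c) (.add a (.add b c))
  | add_comm (a b) : Rel (.add a b) (.add b a)
  | zero_add (a) : Rel (.add .zero a) a
  | one_smul (a) : Rel (.smul 1 a) a
  | mul_smul (r s a) : Rel (.smul (r * s) a) (.smul r (.smul s a))
  | smul_add (r a b) : Rel (.smul r (.add a b)) (.add (.smul r a) (.smul r b))
  | add_smul (r s a) : Rel (.smul (r + s) a) (.add (.smul r a) (.smul s a))
  | zero_smul (a) : Rel (.smul 0 a) .zero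
  | smul_zero (r) : Rel (.smul r .zero) .zero
  | op_add (ω a b) : Rel (.op ω (.add a b)) (.add (.op ω a) (.op ω b))
  | op_zero (ω) : Rel (.op ω .zero) .zero
  | op_ksmul (ω) (c : k) (a) :
      Rel (.op ω (.smul (algebraMap k R c) a)) (.smul (algebraMap k R c) (.op ω a))
  | rb (α β : Ω) (x : R) (m) :
      Rel (.smul (P α x) (.op β m))
        (.add (.add (.add (.op α (.smul x (.op β m))) (.op β (.smul (P α x) m)))
            (.smul (algebraMap k R (lam β)) (.op α (.smul x m))))
          (.smul (algebraMap k R (lam α)) (.op β (.smul x m))))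

def relSetoid : Setoid (PreF R Ω X) :=
  ⟨Rel k X lam P, fun a => Rel.refl a, Rel.symm, Rel.trans⟩

def FreeCar : Type u := Quotient (relSetoid k X lam P)

variable {k X lam P}

def mk (a : PreF R Ω X) : FreeCar k X lam P := Quotient.mk (relSetoid k X lam P) a

lemma sound {a b : PreF R Ω X} (h : Rel k X lam P a b) : mk a = (mk b : FreeCar k X lam P) :=
  Quotient.sound h

instance : Zero (FreeCar k X lam P) := ⟨mk .zero⟩

instance : Add (FreeCar k X lam P) :=
  ⟨Quotient.map₂ .add fun _ _ h _ _ h' => Rel.add_congr h h'⟩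

instance : SMul R (FreeCar k X lam P) :=
  ⟨fun r => Quotient.map (.smul r) fun _ _ h => Rel.smul_congr r h⟩

instance : Neg (FreeCar k X lam P) := ⟨fun a => (-1 : R) • a⟩

lemma mk_add (a b : PreF R Ω X) : (mk a + mk b : FreeCar k X lam P) = mk (.add a b) := rfl
lemma mk_smul (r : R) (a : PreF R Ω X) : (r • mk a : FreeCar k X lam P) = mk (.smul r a) := rfl

lemma zero_def : (0 : FreeCar k X lam P) = mk .zero := rfl

instance : AddCommGroup (FreeCar k X lam P) where
  add_assoc a b c := by
    induction a using Quotient.ind; induction b using Quotient.ind; induction c using Quotient.ind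
    exact sound (Rel.add_assoc _ _ _)
  add_comm a b := by
    induction a using Quotient.ind; induction b using Quotient.ind
    exact sound (Rel.add_comm _ _)
  zero_add a := by
    induction a using Quotient.ind
    exact sound (Rel.zero_add _)
  add_zero a := by
    induction a using Quotient.ind
    exact (sound (Rel.add_comm _ _)).trans (sound (Rel.zero_add _))
  neg_add_cancel a := by
    induction a using Quotient.ind with | _ a =>
    show mk (.add (.smul (-1) a) a) = mk .zero
    calc mk (.add (.smul (-1) a) a)
        = mk (.add (.smul (-1) a) (.smul 1 a)) :=
          sound (Rel.add_congr (Rel.refl _) (Rel.symm (Rel.one_smul a)))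
      _ = mk (.smul (-1 + 1) a) := (sound (Rel.add_smul _ _ _)).symm
      _ = mk (.smul 0 a) := by norm_num
      _ = mk .zero := sound (Rel.zero_smul a)
  nsmul := nsmulRec
  zsmul := zsmulRec

instance : Module R (FreeCar k X lam P) where
  one_smul a := by induction a using Quotient.ind; exact sound (Rel.one_smul _)
  mul_smul r s a := by induction a using Quotient.ind; exact sound (Rel.mul_smul r s _)
  smul_add r a b := by
    induction a using Quotient.ind; induction b using Quotient.ind
    exact sound (Rel.smul_add r _ _)
  smul_zero r := sound (Rel.smul_zero r)
  add_smul r s a := by induction a using Quotient.ind; exact sound (Rel.add_smul r s _)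
  zero_smul a := by induction a using Quotient.ind; exact sound (Rel.zero_smul _)

instance : Module k (FreeCar k X lam P) := Module.compHom _ (algebraMap k R)

lemma ksmul_def (c : k) (a : FreeCar k X lam P) : c • a = (algebraMap k R c) • a := rfl

instance : IsScalarTower k R (FreeCar k X lam P) :=
  ⟨fun c r a => by
    show _ = (algebraMap k R c) • r • a
    rw [Algebra.smul_def, mul_smul]⟩

def opF (ω : Ω) : FreeCar k X lam P →ₗ[k] FreeCar k X lam P where
  toFun := Quotient.map (.op ω) fun _ _ h => Rel.op_congr ω h
  map_add' a b := by
    induction a using Quotient.ind; induction b using Quotient.ind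
    exact sound (Rel.op_add ω _ _)
  map_smul' c a := by
    induction a using Quotient.ind
    exact sound (Rel.op_ksmul ω c _)

lemma opF_mk (ω : Ω) (a : PreF R Ω X) : opF ω (mk a : FreeCar k X lam P) = mk (.op ω a) := rfl

variable (k X lam P) in
def FreeMRB : MRBModule k R Ω lam P where
  carrier := FreeCar k X lam P
  op := opF
  rb α β x m := by
    induction m using Quotient.ind with | _ m =>
    show mk (.smul (P α x) (.op β m)) = _
    rw [ksmul_def, ksmul_def]
    exact sound (Rel.rb α β x m)

def eval (A : MRBModule k R Ω lam P) (f : X → A.carrier) : PreF R Ω X → A.carrier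
  | .var x => f x
  | .zero => 0
  | .add a b => eval A f a + eval A f b
  | .smul r a => r • eval A f a
  | .op ω a => A.op ω (eval A f a)

lemma eval_rel (A : MRBModule k R Ω lam P) (f : X → A.carrier) {a b : PreF R Ω X}
    (h : Rel k X lam P a b) : eval A f a = eval A f b := by
  induction h with
  | refl a => rfl
  | symm _ ih => exact ih.symm
  | trans _ _ ih ih' => exact ih.trans ih'
  | add_congr _ _ ih ih' => simp [eval, ih, ih']
  | smul_congr r _ ih => simp [eval, ih]
  | op_congr ω _ ih => simp [eval, ih]
  | add_assoc a b c => simp [eval, add_assoc]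
  | add_comm a b => simp [eval, add_comm]
  | zero_add a => simp [eval]
  | one_smul a => simp [eval]
  | mul_smul r s a => simp [eval, mul_smul]
  | smul_add r a b => simp [eval]
  | add_smul r s a => simp [eval, add_smul]
  | zero_smul a => simp [eval]
  | smul_zero r => simp [eval]
  | op_add ω a b => simp [eval]
  | op_zero ω => simp [eval]
  | op_ksmul ω c a => simp [eval, algebraMap_smul]
  | rb α β x m =>
    simpa [eval, algebraMap_smul, add_assoc] using A.rb α β x (eval A f m)

def evalHom (A : MRBModule k R Ω lam P) (f : X → A.carrier) :
    FreeCar k X lam P →ₗ[R] A.carrier where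
  toFun := Quotient.lift (eval A f) fun _ _ h => eval_rel A f h
  map_add' a b := by
    induction a using Quotient.ind; induction b using Quotient.ind; rfl
  map_smul' r a := by induction a using Quotient.ind; rfl

lemma evalHom_mk (A : MRBModule k R Ω lam P) (f : X → A.carrier) (a : PreF R Ω X) :
    evalHom A f (mk a) = eval A f a := rfl

lemma evalHom_op (A : MRBModule k R Ω lam P) (f : X → A.carrier) (ω : Ω)
    (u : FreeCar k X lam P) : evalHom A f (opF ω u) = A.op ω (evalHom A f u) := by
  induction u using Quotient.ind; rfl

lemma evalHom_unique (A : MRBModule k R Ω lam P) (f : X → A.carrier)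
    (g : FreeCar k X lam P →ₗ[R] A.carrier)
    (hop : ∀ (ω : Ω) (u : FreeCar k X lam P), g (opF ω u) = A.op ω (g u))
    (hvar : ∀ x : X, g (mk (.var x)) = f x) :
    ∀ u, g u = evalHom A f u := by
  intro u
  induction u using Quotient.ind with | _ a =>
  induction a with
  | var x => exact hvar x
  | zero => exact g.map_zero
  | add a b iha ihb =>
    show g (mk a + mk b) = evalHom A f (mk a + mk b)
    rw [g.map_add, (evalHom A f).map_add]
    exact congrArg₂ (· + ·) iha ihb
  | smul r a ih =>
    show g (r • mk a) = evalHom A f (r • mk a)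
    rw [g.map_smul, (evalHom A f).map_smul]
    exact congrArg (r • ·) ih
  | op ω a ih =>
    show g (opF ω (mk a)) = evalHom A f (opF ω (mk a))
    rw [hop, evalHom_op]
    exact congrArg (A.op ω) ih

end MRBFree

/-- Every projective left `(R, P_Ω)`-module is a direct summand of a
free left `(R, P_Ω)`-module: if `(M, 𝔪_Ω)` is projective then there exist a set `X`, a
free left `(R, P_Ω)`-module `(F, 𝔭_Ω)` on `X`, and left `(R, P_Ω)`-module homomorphisms
`ψ : M → F`, `φ : F → M` with `φ ∘ ψ = id_M`. -/


theorem projective_multiple_rota_baxter_module_is_summand_of_free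
    (k R Ω : Type u) [CommRing k] [Ring R] [Algebra k R] [Nonempty Ω]
    (lam : Ω → k)
    (P : Ω → R →ₗ[k] R)
    (hP : ∀ (α β : Ω) (r₁ r₂ : R),
      P α r₁ * P β r₂ =
        P α (r₁ * P β r₂) + P β (P α r₁ * r₂)
          + lam β • P α (r₁ * r₂) + lam α • P β (r₁ * r₂))
    (M : MRBModule k R Ω lam P)
    (hproj : ∀ (A B : MRBModule k R Ω lam P)
      (θ : A.carrier →ₗ[R] B.carrier),
      (∀ (ω : Ω) (a : A.carrier), θ (A.op ω a) = B.op ω (θ a)) →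
      Function.Surjective θ →
      ∀ φ : M.carrier →ₗ[R] B.carrier,
        (∀ (ω : Ω) (m : M.carrier), φ (M.op ω m) = B.op ω (φ m)) →
        ∃ φbar : M.carrier →ₗ[R] A.carrier,
          (∀ (ω : Ω) (m : M.carrier), φbar (M.op ω m) = A.op ω (φbar m)) ∧
          ∀ m : M.carrier, θ (φbar m) = φ m) :
    ∃ (X : Type u) (F : MRBModule k R Ω lam P) (jX : X → F.carrier),
      (∀ (A : MRBModule k R Ω lam P) (f : X → A.carrier),
        ∃! f' : F.carrier →ₗ[R] A.carrier,
          (∀ (ω : Ω) (u : F.carrier), f' (F.op ω u) = A.op ω (f' u)) ∧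
          ∀ x : X, f' (jX x) = f x) ∧
      ∃ (ψ : M.carrier →ₗ[R] F.carrier) (φ : F.carrier →ₗ[R] M.carrier),
        (∀ (ω : Ω) (m : M.carrier), ψ (M.op ω m) = F.op ω (ψ m)) ∧
        (∀ (ω : Ω) (u : F.carrier), φ (F.op ω u) = M.op ω (φ u)) ∧
        ∀ m : M.carrier, φ (ψ m) = m := by
  refine ⟨M.carrier, MRBFree.FreeMRB k M.carrier lam P, fun x => MRBFree.mk (.var x), ?_, ?_⟩
  · intro A f
    refine ⟨MRBFree.evalHom A f, ⟨MRBFree.evalHom_op A f, fun x => rfl⟩, ?_⟩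
    rintro g ⟨hop, hvar⟩
    exact LinearMap.ext (MRBFree.evalHom_unique A f g hop hvar)
  · have hθop := MRBFree.evalHom_op (lam := lam) (P := P) M (id : M.carrier → M.carrier)
    have hsurj : Function.Surjective (MRBFree.evalHom (lam := lam) (P := P) M
        (id : M.carrier → M.carrier)) := fun m => ⟨MRBFree.mk (.var m), rfl⟩
    obtain ⟨ψ, hψop, hψ⟩ := hproj (MRBFree.FreeMRB k M.carrier lam P) M
      (MRBFree.evalHom M id) hθop hsurj LinearMap.id (fun ω m => rfl)
    exact ⟨ψ, MRBFree.evalHom M id, hψop, hθop, hψ⟩
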